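/- Let x_1 < x_2 < ... < x_m be real numbers with targets y_1, ..., y_m ∈ ℝ, let b_1 ≤ b_2 ≤ ... ≤ b_n (with convention b_{n+1} = +∞) and c_1, ..., c_n ∈ ℝ with c_j ≠ 0 for all j, and let f(x) = Σ_{i=1}^n c_i·max(x − b_i, 0). Suppose the stationarity conditions with respect to the biases hold: for every 1 ≤ j ≤ n, c_j·Σ_{k=1}^m 𝟙[x_k > b_j]·(f(x_k) − y_k) = 0. Then for every 1 ≤ k ≤ n with u_k ≥ 1, Σ_{i=1}^k c_i·(μ_k − b_i) = ȳ_k; equivalently, f(μ_k) = ȳ_k, so the network interpolates the macroscopic data points (μ_k, ȳ_k). -/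

import Mathlib

open scoped Classical

/-- bias-stationarity implies the network interpolates the
macroscopic data points `(μ_k, ȳ_k)`. -/
theorem bias_stationarity_interpolates_macroscopic
    (m n : ℕ) (x y : Fin m → ℝ) (hx : StrictMono x)
    (b : Fin n → ℝ) (hb : Monotone b)
    (c : Fin n → ℝ) (hc : ∀ j, c j ≠ 0)
    (f : ℝ → ℝ) (hf : ∀ t, f t = ∑ i, c i * max (t - b i) 0)
    (inCell : Fin n → Fin m → Prop)
    (hinCell : ∀ k j, inCell k j ↔
      (b k < x j ∧ ∀ h : (k : ℕ) + 1 < n, x j ≤ b ⟨(k : ℕ) + 1, h⟩))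
    (u : Fin n → ℕ)
    (hu : ∀ k, u k = (Finset.univ.filter (fun j => inCell k j)).card)
    (μ ybar : Fin n → ℝ)
    (hμ : ∀ k, μ k =
      (∑ j ∈ Finset.univ.filter (fun j => inCell k j), x j) / (u k : ℝ))
    (hybar : ∀ k, ybar k =
      (∑ j ∈ Finset.univ.filter (fun j => inCell k j), y j) / (u k : ℝ))
    (hstat : ∀ j : Fin n,
      c j * ∑ k, (if b j < x k then (1 : ℝ) else 0) * (f (x k) - y k) = 0) :
    ∀ k : Fin n, 1 ≤ u k →
      (∑ i ∈ Finset.univ.filter (fun i : Fin n => i ≤ k), c i * (μ k - b i)) = ybar k ∧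
      f (μ k) = ybar k := by
  intro k hk
  set T : Finset (Fin m) := Finset.univ.filter (fun j => inCell k j) with hT
  set I : Finset (Fin n) := Finset.univ.filter (fun i : Fin n => i ≤ k) with hI
  have hukT : u k = T.card := hu k
  have hupos : (0 : ℝ) < (u k : ℝ) := by exact_mod_cast hk
  have huk0 : (u k : ℝ) ≠ 0 := ne_of_gt hupos
  -- stationarity rephrased
  have hS : ∀ j : Fin n,
      ∑ t ∈ Finset.univ.filter (fun t => b j < x t), (f (x t) - y t) = 0 := by
    intro j
    have h1 : ∑ t, (if b j < x t then (1:ℝ) else 0) * (f (x t) - y t)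
        = ∑ t ∈ Finset.univ.filter (fun t => b j < x t), (f (x t) - y t) := by
      rw [Finset.sum_filter]
      apply Finset.sum_congr rfl
      intro t _
      split <;> simp
    have := hstat j
    rw [h1] at this
    exact (mul_eq_zero.mp this).resolve_left (hc j)
  -- membership of T
  have hmemT : ∀ t : Fin m, t ∈ T ↔ inCell k t := by
    intro t; simp [hT]
  -- sum over cell vanishes
  have hcell0 : ∑ t ∈ T, (f (x t) - y t) = 0 := by
    by_cases hkn : (k : ℕ) + 1 < n
    · have hble : b k ≤ b ⟨(k:ℕ)+1, hkn⟩ := hb (by simp [Fin.le_def])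
      have hsub : (Finset.univ.filter (fun t => b ⟨(k:ℕ)+1, hkn⟩ < x t))
          ⊆ (Finset.univ.filter (fun t => b k < x t)) := by
        intro t ht
        simp only [Finset.mem_filter, Finset.mem_univ, true_and] at *
        exact lt_of_le_of_lt hble ht
      have hTd : T = (Finset.univ.filter (fun t => b k < x t))
          \ (Finset.univ.filter (fun t => b ⟨(k:ℕ)+1, hkn⟩ < x t)) := by
        ext t
        simp only [hmemT, hinCell, Finset.mem_sdiff, Finset.mem_filter,
          Finset.mem_univ, true_and, not_lt]
        constructor
        · rintro ⟨h1, h2⟩; exact ⟨h1, h2 hkn⟩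
        · rintro ⟨h1, h2⟩; exact ⟨h1, fun _ => h2⟩
      rw [hTd, Finset.sum_sdiff_eq_sub hsub, hS, hS, sub_zero]
    · have hTd : T = Finset.univ.filter (fun t => b k < x t) := by
        ext t
        simp only [hmemT, hinCell, Finset.mem_filter, Finset.mem_univ, true_and]
        constructor
        · rintro ⟨h1, _⟩; exact h1
        · intro h1; exact ⟨h1, fun h => absurd h hkn⟩
      rw [hTd, hS]
  -- f on points of the cell
  have hfT : ∀ t ∈ T, f (x t) = ∑ i ∈ I, c i * (x t - b i) := by
    intro t ht
    have htc := (hinCell k t).mp ((hmemT t).mp ht)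
    rw [hf, hI, Finset.sum_filter]
    apply Finset.sum_congr rfl
    intro i _
    by_cases hik : i ≤ k
    · have hbik : b i ≤ b k := hb hik
      have h0 : (0:ℝ) ≤ x t - b i := by linarith [htc.1]
      rw [if_pos hik, max_eq_left h0]
    · have hki : (k:ℕ) < (i:ℕ) := by
        have := lt_of_not_ge hik; exact this
      have hkn : (k:ℕ) + 1 < n := lt_of_le_of_lt hki i.isLt
      have h1 : x t ≤ b ⟨(k:ℕ)+1, hkn⟩ := htc.2 hkn
      have h2 : b ⟨(k:ℕ)+1, hkn⟩ ≤ b i := hb (by simp [Fin.le_def]; omega)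
      have h0 : x t - b i ≤ 0 := by linarith
      rw [if_neg hik, max_eq_right h0, mul_zero]
  -- sums
  have hsumx : ∑ t ∈ T, x t = (u k : ℝ) * μ k := by
    rw [hμ]; field_simp; rfl
  have hsumy : ∑ t ∈ T, y t = (u k : ℝ) * ybar k := by
    rw [hybar]; field_simp; rfl
  have hfy : ∑ t ∈ T, f (x t) = ∑ t ∈ T, y t := by
    have := hcell0
    rw [Finset.sum_sub_distrib] at this
    linarith
  have hmain : (u k : ℝ) * (∑ i ∈ I, c i * (μ k - b i)) = (u k : ℝ) * ybar k := by
    have h1 : ∑ t ∈ T, f (x t) = ∑ i ∈ I, c i * ((u k : ℝ) * μ k - (T.card : ℝ) * b i) := by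
      rw [Finset.sum_congr rfl hfT, Finset.sum_comm]
      apply Finset.sum_congr rfl
      intro i _
      rw [← Finset.mul_sum, Finset.sum_sub_distrib, Finset.sum_const, hsumx,
        nsmul_eq_mul]
    rw [← hsumy, ← hfy, h1, Finset.mul_sum]
    apply Finset.sum_congr rfl
    intro i _
    have : (T.card : ℝ) = (u k : ℝ) := by exact_mod_cast hukT.symm
    rw [this]; ring
  have part1 : ∑ i ∈ I, c i * (μ k - b i) = ybar k :=
    mul_left_cancel₀ huk0 hmain
  refine ⟨part1, ?_⟩
  -- bounds on μ k
  have hTcard : 0 < T.card := by omega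
  have hμlb : b k ≤ μ k := by
    have h1 : (T.card : ℝ) * b k ≤ ∑ t ∈ T, x t := by
      have := Finset.card_nsmul_le_sum T x (b k)
        (fun t ht => le_of_lt ((hinCell k t).mp ((hmemT t).mp ht)).1)
      rwa [nsmul_eq_mul] at this
    rw [hsumx] at h1
    have hcard : (T.card : ℝ) = (u k : ℝ) := by exact_mod_cast hukT.symm
    rw [hcard] at h1
    nlinarith
  have hμub : ∀ h : (k:ℕ)+1 < n, μ k ≤ b ⟨(k:ℕ)+1, h⟩ := by
    intro hkn
    have h1 : ∑ t ∈ T, x t ≤ (T.card : ℝ) * b ⟨(k:ℕ)+1, hkn⟩ := by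
      have := Finset.sum_le_card_nsmul T x (b ⟨(k:ℕ)+1, hkn⟩)
        (fun t ht => ((hinCell k t).mp ((hmemT t).mp ht)).2 hkn)
      rwa [nsmul_eq_mul] at this
    rw [hsumx] at h1
    have hcard : (T.card : ℝ) = (u k : ℝ) := by exact_mod_cast hukT.symm
    rw [hcard] at h1
    nlinarith
  have hfμ : f (μ k) = ∑ i ∈ I, c i * (μ k - b i) := by
    rw [hf, hI, Finset.sum_filter]
    apply Finset.sum_congr rfl
    intro i _
    by_cases hik : i ≤ k
    · have hbik : b i ≤ b k := hb hik
      have h0 : (0:ℝ) ≤ μ k - b i := by linarith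
      rw [if_pos hik, max_eq_left h0]
    · have hki : (k:ℕ) < (i:ℕ) := lt_of_not_ge hik
      have hkn : (k:ℕ) + 1 < n := lt_of_le_of_lt hki i.isLt
      have h1 : μ k ≤ b ⟨(k:ℕ)+1, hkn⟩ := hμub hkn
      have h2 : b ⟨(k:ℕ)+1, hkn⟩ ≤ b i := hb (by simp [Fin.le_def]; omega)
      have h0 : μ k - b i ≤ 0 := by linarith
      rw [if_neg hik, max_eq_right h0, mul_zero]
  rw [hfμ, part1]
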